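/- Let $Q$ be a CTMC rate matrix with stationary distribution $\pi$ (all $\pi_i > 0$), all off-diagonal entries strictly positive, and define $K = \sum_{a \neq b} \pi_a Q_{ab}$ and the entropy $S(t) = -\sum_{a,b} \pi_a P_{ab}(t) \log P_{ab}(t)$ where $P(t) = \exp(tQ)$. Then as $Kt \to 0$ (rescaling $Q$ by positive multiples while keeping $\pi$ and the ratios $Q_{ab}/Q_{cd}$ fixed), $S(t) = -Kt \log(Kt) + O(Kt)$. -/

import Mathlib

open scoped BigOperators

open Nat

lemma two_pow_le_fact (i : ℕ) : 2 ^ (i+1) ≤ (i+2)! := by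
  induction i with
  | zero => simp [Nat.factorial]
  | succ k ih =>
    have : (k+3)! = (k+3) * (k+2)! := rfl
    calc 2 ^ (k+2) = 2 * 2 ^ (k+1) := by ring
    _ ≤ 2 * (k+2)! := by omega
    _ ≤ (k+3) * (k+2)! := by
        have : 2 ≤ k + 3 := by omega
        exact Nat.mul_le_mul_right _ this
    _ = (k+3)! := rfl

lemma exp_remainder {A : Type*} [NormedRing A] [NormedAlgebra ℝ A] [CompleteSpace A]
    (x : A) (hx : ‖x‖ ≤ 1) : ‖NormedSpace.exp x - 1 - x‖ ≤ ‖x‖ ^ 2 := by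
  have hsum : Summable (fun n : ℕ => ((n ! : ℝ))⁻¹ • x ^ n) := NormedSpace.expSeries_summable' x
  have key := Summable.sum_add_tsum_nat_add (f := fun n : ℕ => ((n ! : ℝ))⁻¹ • x ^ n) 2 hsum
  have h0 : NormedSpace.exp x - 1 - x = ∑' i : ℕ, (((i+2)! : ℝ))⁻¹ • x ^ (i+2) := by
    rw [NormedSpace.exp_eq_tsum (𝕂 := ℝ)]
    show (∑' n : ℕ, ((n ! : ℝ))⁻¹ • x ^ n) - 1 - x = _
    rw [← key]
    simp [Finset.sum_range_succ, Nat.factorial]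
    abel
  have hns : Summable (fun i : ℕ => ‖(((i+2)! : ℝ))⁻¹ • x ^ (i+2)‖) := by
    have h := NormedSpace.norm_expSeries_summable' (𝕂 := ℝ) x
    exact (summable_nat_add_iff 2).mpr h
  have hg : Summable (fun i : ℕ => ‖x‖^2 * ((1/2:ℝ))^(i+1)) := by
    simp_rw [pow_succ]
    exact (((summable_geometric_of_lt_one (by norm_num) (by norm_num)).mul_right _).mul_left _)
  have hb : ∀ i : ℕ, ‖(((i+2)! : ℝ))⁻¹ • x ^ (i+2)‖ ≤ ‖x‖^2 * (1/2:ℝ)^(i+1) := by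
    intro i
    rw [norm_smul]
    have h1 : ‖x ^ (i+2)‖ ≤ ‖x‖^(i+2) := norm_pow_le' x (by omega)
    have h2 : ‖x‖^(i+2) ≤ ‖x‖^2 := by
      calc ‖x‖^(i+2) = ‖x‖^2 * ‖x‖^i := by ring
      _ ≤ ‖x‖^2 * 1 := by
          have := pow_le_one₀ (norm_nonneg x) hx (n := i)
          nlinarith [sq_nonneg ‖x‖]
      _ = ‖x‖^2 := mul_one _
    have h3 : ‖(((i+2)! : ℝ))⁻¹‖ ≤ (1/2:ℝ)^(i+1) := by
      rw [Real.norm_eq_abs, abs_of_nonneg (by positivity)]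
      rw [one_div, inv_pow]
      apply inv_anti₀ (by positivity)
      exact_mod_cast two_pow_le_fact i
    calc ‖(((i+2)! : ℝ))⁻¹‖ * ‖x ^ (i+2)‖ ≤ (1/2:ℝ)^(i+1) * ‖x‖^2 := by
          apply mul_le_mul h3 (h1.trans h2) (norm_nonneg _) (by positivity)
    _ = ‖x‖^2 * (1/2:ℝ)^(i+1) := by ring
  rw [h0]
  calc ‖∑' i : ℕ, (((i+2)! : ℝ))⁻¹ • x ^ (i+2)‖ ≤ ∑' i : ℕ, ‖(((i+2)! : ℝ))⁻¹ • x ^ (i+2)‖ :=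
        norm_tsum_le_tsum_norm hns
  _ ≤ ∑' i : ℕ, ‖x‖^2 * (1/2:ℝ)^(i+1) := Summable.tsum_le_tsum hb hns hg
  _ = ‖x‖^2 := by
      simp_rw [pow_succ]
      rw [tsum_mul_left]
      rw [show ∑' (i:ℕ), (1/2:ℝ)^i * (1/2) = (∑' (i:ℕ), (1/2:ℝ)^i) * (1/2) from tsum_mul_right]
      rw [tsum_geometric_of_lt_one (by norm_num) (by norm_num)]
      norm_num

lemma matrix_exp_entry_est {n : Type*} [Fintype n] [DecidableEq n]
    (A : Matrix n n ℝ) (N : ℝ) (hrow : ∀ a, ∑ b, |A a b| ≤ N) (hN1 : N ≤ 1) (a b : n) :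
    |NormedSpace.exp A a b - (if a = b then (1:ℝ) else 0) - A a b| ≤ N ^ 2 := by
  letI : SeminormedRing (Matrix n n ℝ) := Matrix.linftyOpSemiNormedRing
  letI : NormedRing (Matrix n n ℝ) := Matrix.linftyOpNormedRing
  letI : NormedAlgebra ℝ (Matrix n n ℝ) := Matrix.linftyOpNormedAlgebra
  have hentry : ∀ (M : Matrix n n ℝ) (i j : n), |M i j| ≤ ‖M‖ := by
    intro M i j
    rw [Matrix.linfty_opNorm_def]
    have h1 : ‖M i j‖₊ ≤ ∑ j', ‖M i j'‖₊ :=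
      Finset.single_le_sum (f := fun j' => ‖M i j'‖₊) (fun _ _ => by positivity) (Finset.mem_univ j)
    have h2 : (∑ j', ‖M i j'‖₊) ≤ Finset.univ.sup (fun i => ∑ j', ‖M i j'‖₊) :=
      Finset.le_sup (f := fun i => ∑ j', ‖M i j'‖₊) (Finset.mem_univ i)
    have := h1.trans h2
    rw [← Real.norm_eq_abs, ← coe_nnnorm]
    exact_mod_cast this
  have hN0 : 0 ≤ N := le_trans (Finset.sum_nonneg fun _ _ => abs_nonneg _) (hrow a)
  have hnormA : ‖A‖ ≤ N := by
    rw [Matrix.linfty_opNorm_def, ← Real.coe_toNNReal N hN0]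
    rw [NNReal.coe_le_coe]
    apply Finset.sup_le
    intro i _
    rw [← NNReal.coe_le_coe, Real.coe_toNNReal N hN0]
    push_cast
    simpa [Real.norm_eq_abs] using hrow i
  have h := exp_remainder A (hnormA.trans hN1)
  have h2 := hentry (NormedSpace.exp A - 1 - A) a b
  have h3 : (NormedSpace.exp A - 1 - A) a b
      = NormedSpace.exp A a b - (if a = b then 1 else 0) - A a b := by
    simp [Matrix.sub_apply, Matrix.one_apply]
  rw [← h3]
  refine h2.trans (h.trans ?_)
  exact pow_le_pow_left₀ (norm_nonneg A) hnormA 2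

lemma abs_log_le_near_one {x : ℝ} (hx : 1/2 ≤ x) : |Real.log x| ≤ 2 * |x - 1| := by
  have hx0 : 0 < x := by linarith
  rcases le_or_gt 1 x with h | h
  · rw [abs_of_nonneg (Real.log_nonneg h), abs_of_nonneg (by linarith)]
    have := Real.log_le_sub_one_of_pos hx0
    linarith
  · rw [abs_of_nonpos (Real.log_nonpos hx0.le h.le), abs_of_nonpos (by linarith)]
    have h2 : Real.log x⁻¹ ≤ x⁻¹ - 1 := Real.log_le_sub_one_of_pos (by positivity)
    rw [Real.log_inv] at h2
    have hxi : x * x⁻¹ = 1 := mul_inv_cancel₀ hx0.ne'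
    nlinarith [inv_pos.mpr hx0]

lemma neg_log_le_inv {s : ℝ} (hs : 0 < s) : -Real.log s ≤ 1/s := by
  have h := Real.log_le_sub_one_of_pos (inv_pos.mpr hs)
  rw [Real.log_inv] at h
  rw [one_div]
  linarith [(inv_pos.mpr hs).le]

lemma xlogx_lipschitz {u v x y : ℝ} (hu : 0 < u) (hv : v ≤ 1) (hx : x ∈ Set.Icc u v)
    (hy : y ∈ Set.Icc u v) :
    |x * Real.log x - y * Real.log y| ≤ (1 - Real.log u) * |x - y| := by
  have huv : u ≤ 1 := le_trans (hx.1.trans hx.2) hv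
  have hlogu : Real.log u ≤ 0 := Real.log_nonpos hu.le huv
  have hC : ∀ z ∈ Set.Icc u v, ‖Real.log z + 1‖ ≤ 1 - Real.log u := by
    intro z hz
    have hz0 : 0 < z := lt_of_lt_of_le hu hz.1
    have h1 : Real.log z ≤ 0 := Real.log_nonpos hz0.le (hz.2.trans hv)
    have h2 : Real.log u ≤ Real.log z := Real.log_le_log hu hz.1
    rw [Real.norm_eq_abs, abs_le]
    constructor <;> linarith
  have hderiv : ∀ z ∈ Set.Icc u v,
      HasDerivWithinAt (fun w => w * Real.log w) (Real.log z + 1) (Set.Icc u v) z :=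
    fun z hz => (Real.hasDerivAt_mul_log (ne_of_gt (lt_of_lt_of_le hu hz.1))).hasDerivWithinAt
  have := (convex_Icc u v).norm_image_sub_le_of_norm_hasDerivWithin_le hderiv hC hy hx
  simpa [Real.norm_eq_abs] using this

lemma diag_bound {x s N p : ℝ} (hp : 0 ≤ p) (h1 : |x - 1| ≤ 2*N*s) (hNs : N*s ≤ 1/4)
    (hN : 0 ≤ N) (hs : 0 ≤ s) :
    |p * x * Real.log x| ≤ p * (6*N) * s := by
  have hx1 : |x - 1| ≤ 1/2 := by linarith
  have hxlo : 1/2 ≤ x := by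
    have := abs_le.mp hx1
    linarith [this.1]
  have hxhi : x ≤ 3/2 := by
    have := abs_le.mp hx1
    linarith [this.2]
  have hlog : |Real.log x| ≤ 4*N*s := le_trans (abs_log_le_near_one hxlo) (by linarith)
  have : |p * x * Real.log x| = p * |x| * |Real.log x| := by
    rw [abs_mul, abs_mul, abs_of_nonneg hp]
  rw [this, abs_of_nonneg (by linarith : (0:ℝ) ≤ x)]
  have h2 : x * |Real.log x| ≤ (3/2) * (4*N*s) :=
    mul_le_mul hxhi hlog (abs_nonneg _) (by norm_num)
  have h3 : p * (x * |Real.log x|) ≤ p * ((3/2) * (4*N*s)) :=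
    mul_le_mul_of_nonneg_left h2 hp
  nlinarith [h3]

lemma offdiag_bound {x q K s N p : ℝ} (hp : 0 ≤ p) (hq : 0 < q) (hK : 0 < K) (hs : 0 < s)
    (hqN : q ≤ N) (hN : 0 < N)
    (hx : |x - q*s| ≤ N^2 * s^2)
    (hs1 : s < 1) (hNs : N * s ≤ 1/4) (hNq : N^2 * s ≤ q/2) :
    |p * q * s * Real.log (K*s) - p * x * Real.log x|
      ≤ p * ((2 + |Real.log (q/2)|) * N^2 + q * |Real.log (q/K)|) * s := by
  have hxq : |x - q*s| ≤ (q/2)*s := by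
    refine hx.trans ?_
    have : N^2*s^2 = (N^2*s)*s := by ring
    rw [this]
    exact mul_le_mul_of_nonneg_right hNq hs.le
  have habs := abs_le.mp hxq
  have hu0 : 0 < q*s/2 := by positivity
  have hxmem : x ∈ Set.Icc (q*s/2) (q*s + q*s/2) := by
    constructor <;> nlinarith [habs.1, habs.2]
  have hymem : q*s ∈ Set.Icc (q*s/2) (q*s + q*s/2) := by
    constructor <;> nlinarith [mul_pos hq hs]
  have hqs_le : q*s ≤ N*s := mul_le_mul_of_nonneg_right hqN hs.le
  have hv1 : q*s + q*s/2 ≤ 1 := by nlinarith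
  have A := xlogx_lipschitz hu0 hv1 hxmem hymem
  -- bound (1 - log (q*s/2))
  have hlogu : Real.log (q*s/2) = Real.log (q/2) + Real.log s := by
    rw [show q*s/2 = (q/2)*s by ring, Real.log_mul (by positivity) hs.ne']
  have hnls : 0 < -Real.log s := by
    have := Real.log_neg hs hs1
    linarith
  have hB : 1 - Real.log (q*s/2) ≤ 1 + |Real.log (q/2)| + (-Real.log s) := by
    rw [hlogu]
    have := neg_abs_le (Real.log (q/2))
    linarith
  have hBpos : (0:ℝ) ≤ 1 + |Real.log (q/2)| + (-Real.log s) := by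
    have := abs_nonneg (Real.log (q/2)); linarith
  have R1 : |x * Real.log x - q*s * Real.log (q*s)| ≤ (2 + |Real.log (q/2)|) * N^2 * s := by
    refine (A.trans (mul_le_mul hB hx (abs_nonneg _) hBpos)).trans ?_
    have hss : s^2 ≤ s := by nlinarith
    have hls : (-Real.log s) * s^2 ≤ s := by
      have h1 := neg_log_le_inv hs
      have h2 : (-Real.log s) * s^2 ≤ (1/s) * s^2 :=
        mul_le_mul_of_nonneg_right h1 (sq_nonneg s)
      have h3 : (1/s) * s^2 = s := by field_simp
      linarith
    have habsq := abs_nonneg (Real.log (q/2))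
    have h5 : (1 + |Real.log (q/2)|)*(N^2*s^2) ≤ (1 + |Real.log (q/2)|)*(N^2*s) := by
      have : N^2*s^2 ≤ N^2*s := by nlinarith [sq_nonneg N]
      exact mul_le_mul_of_nonneg_left this (by linarith)
    have h6 : N^2*((-Real.log s)*s^2) ≤ N^2 * s := mul_le_mul_of_nonneg_left hls (sq_nonneg N)
    linarith [h5, h6]
  have key : |q*s*Real.log (K*s) - x*Real.log x|
      ≤ ((2 + |Real.log (q/2)|) * N^2 + q * |Real.log (q/K)|) * s := by
    have e1 : q*s*Real.log (K*s) - x*Real.log x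
        = (q*s*Real.log (q*s) - x*Real.log x) - q*s*Real.log (q/K) := by
      rw [Real.log_mul hq.ne' hs.ne', Real.log_mul hK.ne' hs.ne', Real.log_div hq.ne' hK.ne']
      ring
    rw [e1]
    refine (abs_sub _ _).trans ?_
    rw [abs_sub_comm] at R1
    have h4 : |q*s*Real.log (q/K)| = q * |Real.log (q/K)| * s := by
      rw [abs_mul, abs_mul, abs_of_nonneg hq.le, abs_of_nonneg hs.le]
      ring
    rw [h4]
    linarith [R1]
  have e2 : p * q * s * Real.log (K*s) - p * x * Real.log x
      = p * (q*s*Real.log (K*s) - x*Real.log x) := by ring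
  rw [e2, abs_mul, abs_of_nonneg hp]
  calc p * |q*s*Real.log (K*s) - x*Real.log x|
      ≤ p * (((2 + |Real.log (q/2)|) * N^2 + q * |Real.log (q/K)|) * s) :=
        mul_le_mul_of_nonneg_left key hp
  _ = p * ((2 + |Real.log (q/2)|) * N^2 + q * |Real.log (q/K)|) * s := by ring

/-- Let `Q₀` be a CTMC rate matrix with stationary distribution `π`
(all `π i > 0`), all off-diagonal entries strictly positive, and let
`K₀ = ∑_{a ≠ b} π_a (Q₀)_{ab}`. Rescaling `Q = c • Q₀` by positive multiples `c`
(which keeps `π` and the ratios `Q_ab/Q_cd` fixed and gives `K = c K₀`), the entropy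
`S(t) = -∑_{a,b} π_a P_ab(t) log P_ab(t)` with `P(t) = exp(t • Q)` satisfies
`S(t) = -Kt log(Kt) + O(Kt)` as `Kt → 0`. -/
theorem entropy_small_Kt_expansion
    {n : Type*} [Fintype n] [DecidableEq n]
    (Q₀ : Matrix n n ℝ) (π : n → ℝ)
    (hπpos : ∀ i, 0 < π i) (hπsum : ∑ i, π i = 1)
    (hoff : ∀ a b : n, a ≠ b → 0 < Q₀ a b)
    (hrow : ∀ a : n, ∑ b, Q₀ a b = 0)
    (hstat : ∀ b : n, ∑ a, π a * Q₀ a b = 0)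
    (K₀ : ℝ)
    (hK₀ : K₀ = ∑ a, ∑ b ∈ Finset.univ.erase a, π a * Q₀ a b) :
    ∃ C > (0:ℝ), ∃ δ > (0:ℝ), ∀ c > (0:ℝ), ∀ t > (0:ℝ),
      c * K₀ * t < δ →
      |(-(∑ a, ∑ b, π a * NormedSpace.exp (t • (c • Q₀)) a b
            * Real.log (NormedSpace.exp (t • (c • Q₀)) a b)))
          - (-(c * K₀ * t) * Real.log (c * K₀ * t))|
        ≤ C * (c * K₀ * t) := by
  classical
  by_cases hcard : ∃ p : n × n, p.1 ≠ p.2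
  · obtain ⟨⟨a₀, b₀⟩, hab⟩ := hcard
    simp only at hab
    set N₀ : ℝ := ∑ a, ∑ b, |Q₀ a b| with hN₀def
    have hrowabs : ∀ a, ∑ b, |Q₀ a b| ≤ N₀ := fun a =>
      Finset.single_le_sum (f := fun a' => ∑ b', |Q₀ a' b'|)
        (fun _ _ => Finset.sum_nonneg fun _ _ => abs_nonneg _) (Finset.mem_univ a)
    have hq_le_N : ∀ a b, |Q₀ a b| ≤ N₀ := by
      intro a b
      calc |Q₀ a b| ≤ ∑ b', |Q₀ a b'| :=
            Finset.single_le_sum (f := fun b' => |Q₀ a b'|)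
              (fun _ _ => abs_nonneg _) (Finset.mem_univ b)
      _ ≤ N₀ := hrowabs a
    have hN₀pos : 0 < N₀ :=
      lt_of_lt_of_le (lt_of_lt_of_le (hoff a₀ b₀ hab) (le_abs_self _)) (hq_le_N a₀ b₀)
    have hKpos : 0 < K₀ := by
      rw [hK₀]
      apply Finset.sum_pos ?_ ⟨a₀, Finset.mem_univ a₀⟩
      intro a _
      apply Finset.sum_pos
      · intro b hb
        exact mul_pos (hπpos a) (hoff a b (Finset.ne_of_mem_erase hb).symm)
      · rcases eq_or_ne a a₀ with rfl | hne
        · exact ⟨b₀, Finset.mem_erase.mpr ⟨Ne.symm hab, Finset.mem_univ _⟩⟩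
        · exact ⟨a₀, Finset.mem_erase.mpr ⟨Ne.symm hne, Finset.mem_univ _⟩⟩
    have hoffne : (Finset.univ.offDiag (α := n)).Nonempty :=
      ⟨(a₀, b₀), Finset.mem_offDiag.mpr ⟨Finset.mem_univ _, Finset.mem_univ _, hab⟩⟩
    set qm : ℝ := Finset.inf' _ hoffne (fun p : n × n => Q₀ p.1 p.2) with hqmdef
    have hqmpos : 0 < qm := by
      rw [hqmdef]
      apply (Finset.lt_inf'_iff _).mpr
      intro p hp
      exact hoff p.1 p.2 (Finset.mem_offDiag.mp hp).2.2
    have hqmle : ∀ a b, a ≠ b → qm ≤ Q₀ a b := by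
      intro a b h
      have h2 := Finset.inf'_le (fun p : n × n => Q₀ p.1 p.2)
        (show ((a,b) : n × n) ∈ Finset.univ.offDiag from
          Finset.mem_offDiag.mpr ⟨Finset.mem_univ _, Finset.mem_univ _, h⟩)
      exact h2
    set δs : ℝ := min (qm/(2*N₀^2)) (min (1/(4*N₀)) (1/2)) with hδsdef
    have hδspos : 0 < δs :=
      lt_min (div_pos hqmpos (by positivity)) (lt_min (by positivity) (by norm_num))
    set Ca : n → ℝ := fun a => π a * (6*N₀) with hCa
    set Cab : n → n → ℝ := fun a b =>
      π a * ((2 + |Real.log (Q₀ a b/2)|) * N₀^2 + Q₀ a b * |Real.log (Q₀ a b / K₀)|) with hCab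
    set Cbig : ℝ := ∑ a, (Ca a + ∑ b ∈ Finset.univ.erase a, Cab a b) with hCbig
    have hCa0 : ∀ a, 0 ≤ Ca a := fun a =>
      mul_nonneg (hπpos a).le (by positivity)
    have hCab0 : ∀ a b, a ≠ b → 0 ≤ Cab a b := by
      intro a b h
      rw [hCab]
      have h1 := (hoff a b h).le
      have h2 := abs_nonneg (Real.log (Q₀ a b/2))
      have h3 := abs_nonneg (Real.log (Q₀ a b/K₀))
      have h4 := (hπpos a).le
      positivity
    have hCbig0 : 0 ≤ Cbig := by
      rw [hCbig]
      apply Finset.sum_nonneg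
      intro a _
      have : 0 ≤ ∑ b ∈ Finset.univ.erase a, Cab a b :=
        Finset.sum_nonneg fun b hb => hCab0 a b (Finset.ne_of_mem_erase hb).symm
      linarith [hCa0 a]
    refine ⟨(Cbig + 1)/K₀, div_pos (by linarith) hKpos, K₀ * δs, mul_pos hKpos hδspos, ?_⟩
    intro c hc t ht hlt
    have hspos : 0 < c * t := mul_pos hc ht
    have hKs : c * K₀ * t = K₀ * (c * t) := by ring
    have hsmul : t • (c • Q₀) = (c * t) • Q₀ := by rw [smul_smul, mul_comm t c]
    rw [hKs] at hlt ⊢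
    rw [hsmul]
    set s : ℝ := c * t with hsdef
    have hsδ : s < δs := by
      have h := hlt
      exact lt_of_mul_lt_mul_left (by linarith) hKpos.le
    have hs_half : s < 1/2 := lt_of_lt_of_le hsδ ((min_le_right _ _).trans (min_le_right _ _))
    have hs1 : s < 1 := by linarith
    have hsN : N₀ * s ≤ 1/4 := by
      have h1 : s ≤ 1/(4*N₀) := hsδ.le.trans ((min_le_right _ _).trans (min_le_left _ _))
      calc N₀ * s ≤ N₀ * (1/(4*N₀)) := mul_le_mul_of_nonneg_left h1 hN₀pos.le
      _ = 1/4 := by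
        field_simp
    have hsq : N₀^2 * s ≤ qm/2 := by
      have h1 : s ≤ qm/(2*N₀^2) := hsδ.le.trans (min_le_left _ _)
      calc N₀^2*s ≤ N₀^2 * (qm/(2*N₀^2)) := mul_le_mul_of_nonneg_left h1 (by positivity)
      _ = qm/2 := by field_simp
    set E : Matrix n n ℝ := NormedSpace.exp (s • Q₀) with hE
    have hEnt : ∀ a b, |E a b - (if a = b then (1:ℝ) else 0) - s * Q₀ a b| ≤ N₀^2 * s^2 := by
      intro a b
      have hrowA : ∀ a, ∑ b, |(s • Q₀) a b| ≤ s * N₀ := by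
        intro a
        have : ∀ b, |(s • Q₀) a b| = s * |Q₀ a b| := by
          intro b
          rw [Matrix.smul_apply, smul_eq_mul, abs_mul, abs_of_pos hspos]
        simp_rw [this, ← Finset.mul_sum]
        exact mul_le_mul_of_nonneg_left (hrowabs a) hspos.le
      have h1 : s * N₀ ≤ 1 := by nlinarith
      have h := matrix_exp_entry_est (s • Q₀) (s * N₀) hrowA h1 a b
      rw [hE]
      have h2 : (s • Q₀) a b = s * Q₀ a b := by rw [Matrix.smul_apply, smul_eq_mul]
      rw [h2] at h
      have h3 : (s*N₀)^2 = N₀^2 * s^2 := by ring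
      rwa [h3] at h
    have hdiag : ∀ a, |π a * E a a * Real.log (E a a)| ≤ Ca a * s := by
      intro a
      have h := hEnt a a
      rw [if_pos rfl] at h
      have h2 : |s * Q₀ a a| ≤ s * N₀ := by
        rw [abs_mul, abs_of_pos hspos]
        exact mul_le_mul_of_nonneg_left (hq_le_N a a) hspos.le
      have h3 : |E a a - 1| ≤ |E a a - 1 - s * Q₀ a a| + |s * Q₀ a a| := by
        calc |E a a - 1| = |(E a a - 1 - s * Q₀ a a) + s * Q₀ a a| := by ring_nf
        _ ≤ _ := abs_add_le _ _
      have h1 : |E a a - 1| ≤ 2*N₀*s := by nlinarith [mul_nonneg hN₀pos.le hspos.le]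
      have := diag_bound (hπpos a).le h1 hsN hN₀pos.le hspos.le
      rw [hCa]
      exact this
    have hoffd : ∀ a, ∀ b ∈ Finset.univ.erase a,
        |π a * Q₀ a b * s * Real.log (K₀*s) - π a * E a b * Real.log (E a b)| ≤ Cab a b * s := by
      intro a b hb
      have hne' : a ≠ b := (Finset.ne_of_mem_erase hb).symm
      have h := hEnt a b
      rw [if_neg hne'] at h
      have h' : |E a b - Q₀ a b * s| ≤ N₀^2 * s^2 := by
        have he : E a b - (0:ℝ) - s * Q₀ a b = E a b - Q₀ a b * s := by ring
        rwa [he] at h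
      have hq := hoff a b hne'
      have hqN : Q₀ a b ≤ N₀ := le_trans (le_abs_self _) (hq_le_N a b)
      have hNq : N₀^2 * s ≤ Q₀ a b / 2 := le_trans hsq (by linarith [hqmle a b hne'])
      have hres := offdiag_bound (hπpos a).le hq hKpos hspos hqN hN₀pos h' hs1 hsN hNq
      rw [hCab]
      exact hres
    have hre : (-(∑ a, ∑ b, π a * E a b * Real.log (E a b))) - (-(K₀*s) * Real.log (K₀*s))
        = ∑ a, ((∑ b ∈ Finset.univ.erase a,
            (π a * Q₀ a b * s * Real.log (K₀*s) - π a * E a b * Real.log (E a b)))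
            - π a * E a a * Real.log (E a a)) := by
      set L := Real.log (K₀ * s) with hLdef
      have h1 : ∀ a, ∑ b, π a * E a b * Real.log (E a b)
          = π a * E a a * Real.log (E a a)
            + ∑ b ∈ Finset.univ.erase a, π a * E a b * Real.log (E a b) :=
        fun a => (Finset.add_sum_erase _ _ (Finset.mem_univ a)).symm
      have h2 : (∑ a, ∑ b ∈ Finset.univ.erase a, π a * Q₀ a b) * s * L
          = ∑ a, ∑ b ∈ Finset.univ.erase a, π a * Q₀ a b * s * L := by
        rw [Finset.sum_mul, Finset.sum_mul]
        refine Finset.sum_congr rfl fun a _ => ?_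
        rw [Finset.sum_mul, Finset.sum_mul]
      rw [hK₀, neg_mul, h2]
      simp_rw [h1, Finset.sum_add_distrib, Finset.sum_sub_distrib]
      ring
    rw [hre]
    calc |∑ a, ((∑ b ∈ Finset.univ.erase a,
            (π a * Q₀ a b * s * Real.log (K₀*s) - π a * E a b * Real.log (E a b)))
            - π a * E a a * Real.log (E a a))|
        ≤ ∑ a, |(∑ b ∈ Finset.univ.erase a,
            (π a * Q₀ a b * s * Real.log (K₀*s) - π a * E a b * Real.log (E a b)))
            - π a * E a a * Real.log (E a a)| := Finset.abs_sum_le_sum_abs _ _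
    _ ≤ ∑ a, (Ca a + ∑ b ∈ Finset.univ.erase a, Cab a b) * s := by
        apply Finset.sum_le_sum
        intro a _
        refine (abs_sub _ _).trans ?_
        have hA : |∑ b ∈ Finset.univ.erase a,
            (π a * Q₀ a b * s * Real.log (K₀*s) - π a * E a b * Real.log (E a b))|
            ≤ (∑ b ∈ Finset.univ.erase a, Cab a b) * s := by
          calc |∑ b ∈ Finset.univ.erase a, _|
              ≤ ∑ b ∈ Finset.univ.erase a,
                |π a * Q₀ a b * s * Real.log (K₀*s) - π a * E a b * Real.log (E a b)| :=
                Finset.abs_sum_le_sum_abs _ _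
          _ ≤ ∑ b ∈ Finset.univ.erase a, Cab a b * s := Finset.sum_le_sum (hoffd a)
          _ = (∑ b ∈ Finset.univ.erase a, Cab a b) * s := (Finset.sum_mul _ _ _).symm
        have hB := hdiag a
        have : (Ca a + ∑ b ∈ Finset.univ.erase a, Cab a b) * s
            = (∑ b ∈ Finset.univ.erase a, Cab a b) * s + Ca a * s := by ring
        rw [this]
        exact add_le_add hA hB
    _ = Cbig * s := by rw [hCbig, Finset.sum_mul]
    _ ≤ (Cbig + 1)/K₀ * (K₀ * s) := by
        have heq : (Cbig + 1)/K₀ * (K₀ * s) = (Cbig + 1) * s := by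
          field_simp
        rw [heq]
        nlinarith [hspos.le]
  · -- degenerate case: all indices equal
    push_neg at hcard
    have hsub : ∀ a b : n, a = b := fun a b => hcard (a, b)
    have hK0 : K₀ = 0 := by
      rw [hK₀]
      apply Finset.sum_eq_zero; intro a _
      apply Finset.sum_eq_zero; intro b hb
      exact absurd (hsub b a) (Finset.ne_of_mem_erase hb)
    have hQ0 : Q₀ = 0 := by
      ext a b
      have hba : b = a := hsub b a
      subst hba
      have h := hrow b
      rw [Fintype.sum_eq_single b (fun x hx => absurd (hsub x b) hx)] at h
      simpa using h
    refine ⟨1, one_pos, 1, one_pos, ?_⟩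
    intro c hc t ht _
    have hexp : NormedSpace.exp (t • (c • Q₀)) = 1 := by
      rw [hQ0]
      simp [NormedSpace.exp_zero]
    have hent : ∀ a b : n, NormedSpace.exp (t • (c • Q₀)) a b = 1 := by
      intro a b
      rw [hexp, Matrix.one_apply, if_pos (hsub a b)]
    simp only [hent, hK0, mul_zero, zero_mul, Real.log_one, Real.log_zero]
    norm_num
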